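/- Let P be the Puiseux monoid generated by { (p_{2n}² + 1)/p_{2n}, (p_{2n+1} + 1)/p_{2n+1} : n ∈ ℕ }, where (p_n) is a strictly increasing sequence of prime numbers. Then P is an FF-monoid but P is not generated by any increasing sequence. -/

import Mathlib

/-- `a` is an atom of the additive submonoid `P`. -/
def IsAtomOf {K : Type*} [AddCommMonoid K] (P : AddSubmonoid K) (a : K) : Prop :=
  a ∈ P ∧ a ≠ 0 ∧ ∀ x ∈ P, ∀ y ∈ P, a = x + y → x = 0 ∨ y = 0

/-- `P` is atomic: every element is a finite sum of atoms. -/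
def IsAtomicMonoid {K : Type*} [AddCommMonoid K] (P : AddSubmonoid K) : Prop :=
  ∀ x ∈ P, ∃ s : Multiset K, (∀ a ∈ s, IsAtomOf P a) ∧ s.sum = x

/-- The set of factorizations of `x` into atoms of `P`. -/
def Factorizations {K : Type*} [AddCommMonoid K] (P : AddSubmonoid K) (x : K) :
    Set (Multiset K) :=
  {s | (∀ a ∈ s, IsAtomOf P a) ∧ s.sum = x}

/-- `P` is an FF-monoid. -/
def IsFFMonoid {K : Type*} [AddCommMonoid K] (P : AddSubmonoid K) : Prop :=
  IsAtomicMonoid P ∧ ∀ x ∈ P, (Factorizations P x).Finite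

/-- `P` is a BF-monoid. -/
def IsBFMonoid {K : Type*} [AddCommMonoid K] (P : AddSubmonoid K) : Prop :=
  IsAtomicMonoid P ∧ ∀ x ∈ P, {n : ℕ | ∃ s ∈ Factorizations P x, Multiset.card s = n}.Finite

namespace FFaux

variable (p : ℕ → ℕ)

def Nval (j : ℕ) : ℕ := if Even j then (p j) ^ 2 + 1 else (p j) + 1

def Gen (j : ℕ) : ℚ := (Nval p j : ℚ) / (p j)

lemma not_dvd_Nval (hp : ∀ n, (p n).Prime) (j : ℕ) : ¬ p j ∣ Nval p j := by
  intro h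
  have h1 : p j ∣ 1 := by
    unfold Nval at h
    split_ifs at h with he
    · exact (Nat.dvd_add_right (dvd_pow_self _ two_ne_zero)).mp h
    · exact (Nat.dvd_add_right dvd_rfl).mp h
  exact (hp j).one_lt.ne' (Nat.dvd_one.mp h1)

lemma den_Gen (hp : ∀ n, (p n).Prime) (j : ℕ) : (Gen p j).den = p j := by
  have h := Rat.den_div_eq_of_coprime (a := (Nval p j : ℤ)) (b := (p j : ℤ))
    (by exact_mod_cast (hp j).pos)
    (by simpa [Int.natAbs_natCast] using
      (Nat.coprime_comm.mp (((hp j).coprime_iff_not_dvd).mpr (not_dvd_Nval p hp j))))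
  have heq : Gen p j = ((Nval p j : ℤ) : ℚ) / ((p j : ℤ) : ℚ) := by
    rw [Gen]; push_cast; ring
  rw [heq] at *
  exact_mod_cast h

lemma p_lt_Nval (j : ℕ) (hp : ∀ n, (p n).Prime) : p j < Nval p j := by
  unfold Nval
  split_ifs with he
  · nlinarith [(hp j).two_le]
  · omega

lemma one_lt_Gen (hp : ∀ n, (p n).Prime) (j : ℕ) : 1 < Gen p j := by
  rw [Gen, lt_div_iff₀ (by exact_mod_cast (hp j).pos)]
  rw [one_mul]
  exact_mod_cast (p_lt_Nval p j hp)

lemma Gen_inj (hp : ∀ n, (p n).Prime) (hmono : StrictMono p) {j k : ℕ}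
    (h : Gen p j = Gen p k) : j = k := by
  have := den_Gen p hp j
  have h2 := den_Gen p hp k
  exact hmono.injective (by rw [← this, ← h2, h])


lemma not_dvd_den_add {r : ℕ} (hr : r.Prime) {a b : ℚ} (ha : ¬ r ∣ a.den)
    (hb : ¬ r ∣ b.den) : ¬ r ∣ (a + b).den := fun h =>
  ((hr.dvd_mul.mp (h.trans (Rat.add_den_dvd a b))).elim ha hb)

lemma dvd_den_add {r : ℕ} (hr : r.Prime) {a b : ℚ} (ha : r ∣ a.den)
    (hb : ¬ r ∣ b.den) : r ∣ (a + b).den := by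
  have heq : a = (a + b) + (-b) := by ring
  have hd := Rat.add_den_dvd (a + b) (-b)
  rw [← heq] at hd
  rcases hr.dvd_mul.mp (ha.trans hd) with h | h
  · exact h
  · exact absurd (by rwa [Rat.neg_den] at h) hb

lemma not_dvd_den_sum {r : ℕ} (hr : r.Prime) (L : Multiset ℚ)
    (h : ∀ a ∈ L, ¬ r ∣ a.den) : ¬ r ∣ L.sum.den := by
  induction L using Multiset.induction with
  | empty => simpa using hr.one_lt.ne'
  | cons a t ih =>
      rw [Multiset.sum_cons]
      exact not_dvd_den_add hr (h a (Multiset.mem_cons_self a t))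
        (ih fun b hb => h b (Multiset.mem_cons_of_mem hb))

/-- Decomposition of a multiset of generators relative to a fixed generator. -/
lemma sum_decomp (hp : ∀ n, (p n).Prime) (hmono : StrictMono p) (j : ℕ) (L : Multiset ℚ)
    (hL : ∀ a ∈ L, ∃ k, a = Gen p k) :
    ∃ t : ℚ, L.sum = (L.count (Gen p j)) • Gen p j + t ∧ 0 ≤ t ∧ ¬ p j ∣ t.den := by
  classical
  refine ⟨(L.filter (fun a => ¬ a = Gen p j)).sum, ?_, ?_, ?_⟩
  · conv_lhs => rw [← Multiset.filter_add_not (fun a => a = Gen p j) L]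
    rw [Multiset.sum_add, Multiset.filter_eq', Multiset.sum_replicate]
  · apply Multiset.sum_nonneg
    intro a ha
    obtain ⟨k, rfl⟩ := hL a (Multiset.mem_of_mem_filter ha)
    exact (one_lt_Gen p hp k).le.trans' zero_le_one
  · apply not_dvd_den_sum (hp j)
    intro a ha
    rw [Multiset.mem_filter] at ha
    obtain ⟨k, rfl⟩ := hL a ha.1
    have hk : k ≠ j := fun hkj => ha.2 (by rw [hkj])
    rw [den_Gen p hp k]
    intro hdvd
    exact hk (hmono.injective ((Nat.prime_dvd_prime_iff_eq (hp j) (hp k)).mp hdvd).symm)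

lemma count_dvd (hp : ∀ n, (p n).Prime) (hmono : StrictMono p) (j : ℕ) (L : Multiset ℚ)
    (hL : ∀ a ∈ L, ∃ k, a = Gen p k) (hden : ¬ p j ∣ L.sum.den) :
    p j ∣ L.count (Gen p j) := by
  by_contra hm
  obtain ⟨t, hsum, _, htd⟩ := sum_decomp p hp hmono j L hL
  set m := L.count (Gen p j)
  have hsm : (m • Gen p j) = ((m * Nval p j : ℤ) : ℚ) / ((p j : ℤ) : ℚ) := by
    rw [Gen, nsmul_eq_mul]; push_cast; ring
  have hcop : Nat.Coprime (m * Nval p j : ℤ).natAbs ((p j : ℤ)).natAbs := by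
    simp only [Int.natAbs_mul, Int.natAbs_natCast]
    exact Nat.Coprime.mul
      (Nat.coprime_comm.mp (((hp j).coprime_iff_not_dvd).mpr hm))
      (Nat.coprime_comm.mp (((hp j).coprime_iff_not_dvd).mpr (not_dvd_Nval p hp j)))
  have hden' : (m • Gen p j).den = p j := by
    have := Rat.den_div_eq_of_coprime (a := (m * Nval p j : ℤ)) (b := (p j : ℤ))
      (by exact_mod_cast (hp j).pos) hcop
    rw [hsm]; exact_mod_cast this
  exact hden (hsum ▸ dvd_den_add (hp j) (hden' ▸ dvd_rfl) htd)


lemma atom_mem_of_closure {S : Set ℚ} {a : ℚ}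
    (ha : IsAtomOf (AddSubmonoid.closure S) a) : a ∈ S := by
  obtain ⟨haP, ha0, hsplit⟩ := ha
  obtain ⟨L, hLmem, hLsum⟩ := AddSubmonoid.exists_multiset_of_mem_closure haP
  clear haP
  induction L using Multiset.induction with
  | empty => exact absurd hLsum.symm ha0
  | cons b t ih =>
      rw [Multiset.sum_cons] at hLsum
      have hb : b ∈ AddSubmonoid.closure S :=
        AddSubmonoid.subset_closure (hLmem b (Multiset.mem_cons_self b t))
      have ht : t.sum ∈ AddSubmonoid.closure S :=
        AddSubmonoid.multiset_sum_mem _ _ fun y hy =>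
          AddSubmonoid.subset_closure (hLmem y (Multiset.mem_cons_of_mem hy))
      rcases hsplit b hb t.sum ht hLsum.symm with hb0 | ht0
      · exact ih (fun y hy => hLmem y (Multiset.mem_cons_of_mem hy))
          (by rw [← hLsum, hb0, zero_add])
      · rw [← hLsum, ht0, add_zero]
        exact hLmem b (Multiset.mem_cons_self b t)

lemma mem_nonneg (hp : ∀ n, (p n).Prime) :
    ∀ x ∈ AddSubmonoid.closure (Set.range (Gen p)), 0 ≤ x := by
  intro x hx
  induction hx using AddSubmonoid.closure_induction with
  | mem a ha => obtain ⟨k, rfl⟩ := ha; exact (zero_lt_one.trans (one_lt_Gen p hp k)).le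
  | zero => exact le_refl 0
  | add a b _ _ ha hb => exact add_nonneg ha hb

lemma gen_isAtom (hp : ∀ n, (p n).Prime) (hmono : StrictMono p) (j : ℕ) :
    IsAtomOf (AddSubmonoid.closure (Set.range (Gen p))) (Gen p j) := by
  refine ⟨AddSubmonoid.subset_closure ⟨j, rfl⟩,
    (zero_lt_one.trans (one_lt_Gen p hp j)).ne', ?_⟩
  intro x hx y hy hxy
  obtain ⟨Lx, hLx, hLxs⟩ := AddSubmonoid.exists_multiset_of_mem_closure hx
  obtain ⟨Ly, hLy, hLys⟩ := AddSubmonoid.exists_multiset_of_mem_closure hy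
  set L := Lx + Ly with hLdef
  have hLmem : ∀ a ∈ L, ∃ k, a = Gen p k := by
    intro a ha
    rcases Multiset.mem_add.mp ha with h | h
    · obtain ⟨k, hk⟩ := hLx a h; exact ⟨k, hk.symm⟩
    · obtain ⟨k, hk⟩ := hLy a h; exact ⟨k, hk.symm⟩
  have hLsum : L.sum = Gen p j := by rw [Multiset.sum_add, hLxs, hLys, hxy]
  have hmem : Gen p j ∈ L := by
    by_contra hnot
    have hd : ∀ a ∈ L, ¬ p j ∣ a.den := by
      intro a ha
      obtain ⟨k, rfl⟩ := hLmem a ha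
      have hk : k ≠ j := fun hkj => hnot (hkj ▸ ha)
      rw [den_Gen p hp k]
      intro hdvd
      exact hk (hmono.injective ((Nat.prime_dvd_prime_iff_eq (hp j) (hp k)).mp hdvd).symm)
    have := not_dvd_den_sum (hp j) L hd
    rw [hLsum, den_Gen p hp j] at this
    exact this dvd_rfl
  have hL1 : L = {Gen p j} := by
    have hc := Multiset.cons_erase hmem
    have hsum0 : (L.erase (Gen p j)).sum = 0 := by
      have h1 : Gen p j + (L.erase (Gen p j)).sum = Gen p j := by
        rw [← Multiset.sum_cons, hc, hLsum]
      linarith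
    have he0 : L.erase (Gen p j) = 0 := by
      by_contra h0
      obtain ⟨b, hb⟩ := Multiset.exists_mem_of_ne_zero h0
      have hnn : ∀ c ∈ L.erase (Gen p j), (0:ℚ) ≤ c := by
        intro c hc'
        obtain ⟨k, rfl⟩ := hLmem c (Multiset.mem_of_mem_erase hc')
        exact (zero_lt_one.trans (one_lt_Gen p hp k)).le
      have hble : b ≤ (L.erase (Gen p j)).sum := Multiset.single_le_sum hnn b hb
      obtain ⟨k, rfl⟩ := hLmem b (Multiset.mem_of_mem_erase hb)
      have := one_lt_Gen p hp k
      linarith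
    rw [← hc, he0]
    rfl
  have hcard : Multiset.card Lx + Multiset.card Ly = 1 := by
    have := congrArg Multiset.card hL1
    simpa [hLdef] using this
  rcases Nat.add_eq_one_iff.mp hcard with ⟨h1, _⟩ | ⟨_, h1⟩
  · left; rw [← hLxs, Multiset.card_eq_zero.mp h1, Multiset.sum_zero]
  · right; rw [← hLys, Multiset.card_eq_zero.mp h1, Multiset.sum_zero]


lemma atomic (hp : ∀ n, (p n).Prime) (hmono : StrictMono p) :
    IsAtomicMonoid (AddSubmonoid.closure (Set.range (Gen p))) := by
  intro x hx
  obtain ⟨L, hL, hLsum⟩ := AddSubmonoid.exists_multiset_of_mem_closure hx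
  exact ⟨L, fun a ha => by
    obtain ⟨j, hj⟩ := hL a ha; exact hj ▸ gen_isAtom p hp hmono j, hLsum⟩

lemma factorizations_finite (hp : ∀ n, (p n).Prime) (hmono : StrictMono p) (x : ℚ) :
    (Factorizations (AddSubmonoid.closure (Set.range (Gen p))) x).Finite := by
  classical
  set N : ℕ := ⌈x⌉₊ with hN
  set D : Finset ℕ := x.den.primeFactors ∪ Finset.range (N + 1) with hD
  have hJfin : {j : ℕ | p j ∈ D}.Finite :=
    Set.Finite.preimage (Set.injOn_of_injective hmono.injective) D.finite_toSet
  set A : Finset ℚ := hJfin.toFinset.image (Gen p) with hA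
  set T : Multiset ℚ := N • A.val with hT
  apply Set.Finite.subset (T.powerset.toFinset.finite_toSet)
  rintro s ⟨hats, hsum⟩
  have hgens : ∀ a ∈ s, ∃ j, a = Gen p j := by
    intro a ha
    obtain ⟨j, hj⟩ := atom_mem_of_closure (hats a ha)
    exact ⟨j, hj.symm⟩
  have hcard : Multiset.card s ≤ N := by
    have h1 : (Multiset.card s) • (1:ℚ) ≤ s.sum :=
      Multiset.card_nsmul_le_sum (fun a ha => by
        obtain ⟨j, rfl⟩ := hgens a ha; exact (one_lt_Gen p hp j).le)
    rw [nsmul_eq_mul, mul_one, hsum] at h1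
    have h2 : (Multiset.card s : ℚ) ≤ (N : ℚ) := h1.trans (Nat.le_ceil x)
    exact_mod_cast h2
  have hmemA : ∀ a ∈ s, a ∈ A := by
    intro a ha
    obtain ⟨j, rfl⟩ := hgens a ha
    rw [hA, Finset.mem_image]
    refine ⟨j, ?_, rfl⟩
    rw [Set.Finite.mem_toFinset]
    show p j ∈ D
    by_cases hdvd : p j ∣ x.den
    · exact Finset.mem_union_left _ (Nat.mem_primeFactors.mpr ⟨hp j, hdvd, x.den_pos.ne'⟩)
    · refine Finset.mem_union_right _ (Finset.mem_range.mpr ?_)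
      have hdm : p j ∣ s.count (Gen p j) :=
        count_dvd p hp hmono j s hgens (by rw [hsum]; exact hdvd)
      have h1le : 1 ≤ s.count (Gen p j) := Multiset.one_le_count_iff_mem.mpr ha
      have h2 : p j ≤ s.count (Gen p j) := Nat.le_of_dvd (by omega) hdm
      have h3 := (Multiset.count_le_card (Gen p j) s)
      omega
  rw [Finset.mem_coe, Multiset.mem_toFinset, Multiset.mem_powerset, Multiset.le_iff_count]
  intro a
  by_cases ha : a ∈ s
  · have haA := hmemA a ha
    rw [hT, Multiset.count_nsmul, Multiset.count_eq_one_of_mem A.nodup haA, mul_one]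
    exact (Multiset.count_le_card a s).trans hcard
  · rw [Multiset.count_eq_zero_of_notMem ha]
    exact Nat.zero_le _

lemma gen_odd_lt (hp : ∀ n, (p n).Prime) (hmono : StrictMono p) {n m : ℕ} (h : n < m) :
    Gen p (2 * m + 1) < Gen p (2 * n + 1) := by
  have hne1 : ¬ Even (2 * n + 1) := by simp [Nat.even_add_one]
  have hne2 : ¬ Even (2 * m + 1) := by simp [Nat.even_add_one]
  rw [Gen, Gen, Nval, Nval, if_neg hne1, if_neg hne2]
  have hlt : p (2 * n + 1) < p (2 * m + 1) := hmono (by omega)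
  have h1 : (0:ℚ) < p (2 * n + 1) := by exact_mod_cast (hp _).pos
  have h2 : (0:ℚ) < p (2 * m + 1) := by exact_mod_cast (hp _).pos
  rw [div_lt_div_iff₀ h2 h1]
  have : (p (2 * n + 1) : ℚ) < (p (2 * m + 1) : ℚ) := by exact_mod_cast hlt
  push_cast
  nlinarith

end FFaux

theorem ff_not_increasing (p : ℕ → ℕ) (hmono : StrictMono p) (hp : ∀ n, (p n).Prime)
    (P : AddSubmonoid ℚ)
    (hgen : AddSubmonoid.closure
        {q : ℚ | ∃ n : ℕ, q = ((p (2 * n) : ℚ) ^ 2 + 1) / (p (2 * n) : ℚ) ∨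
          q = ((p (2 * n + 1) : ℚ) + 1) / (p (2 * n + 1) : ℚ)} = P) :
    IsFFMonoid P ∧
      ¬∃ f : ℕ → ℚ, Monotone f ∧ AddSubmonoid.closure (Set.range f) = P := by
  have hset : {q : ℚ | ∃ n : ℕ, q = ((p (2 * n) : ℚ) ^ 2 + 1) / (p (2 * n) : ℚ) ∨
      q = ((p (2 * n + 1) : ℚ) + 1) / (p (2 * n + 1) : ℚ)} = Set.range (FFaux.Gen p) := by
    ext q
    simp only [Set.mem_setOf_eq, Set.mem_range]
    constructor
    · rintro ⟨n, h | h⟩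
      · exact ⟨2 * n, by
          rw [h, FFaux.Gen, FFaux.Nval, if_pos (even_two_mul n)]; push_cast; ring⟩
      · exact ⟨2 * n + 1, by
          rw [h, FFaux.Gen, FFaux.Nval, if_neg (by simp [Nat.even_add_one])]
          push_cast; ring⟩
    · rintro ⟨j, rfl⟩
      rcases Nat.even_or_odd j with ⟨n, hn⟩ | ⟨n, hn⟩
      · refine ⟨n, Or.inl ?_⟩
        have hj : j = 2 * n := by omega
        subst hj
        rw [FFaux.Gen, FFaux.Nval, if_pos (even_two_mul n)]; push_cast; ring
      · refine ⟨n, Or.inr ?_⟩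
        subst hn
        rw [FFaux.Gen, FFaux.Nval, if_neg (by simp [Nat.even_add_one])]
        push_cast; ring
  rw [hset] at hgen
  subst hgen
  refine ⟨⟨FFaux.atomic p hp hmono, fun x _ => FFaux.factorizations_finite p hp hmono x⟩, ?_⟩
  rintro ⟨f, hf, hfP⟩
  have hmem : ∀ n : ℕ, ∃ k, f k = FFaux.Gen p (2 * n + 1) := by
    intro n
    exact FFaux.atom_mem_of_closure (S := Set.range f)
      (hfP ▸ FFaux.gen_isAtom p hp hmono (2 * n + 1))
  choose k hk using hmem
  have hdesc : ∀ n, k (n + 1) < k n := by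
    intro n
    by_contra hle
    have : f (k n) ≤ f (k (n + 1)) := hf (by omega)
    rw [hk, hk] at this
    exact absurd this (not_le.mpr (FFaux.gen_odd_lt p hp hmono (Nat.lt_succ_self n)))
  have hle : ∀ n, k n + n ≤ k 0 := by
    intro n
    induction n with
    | zero => simp
    | succ n ih => have := hdesc n; omega
  have := hle (k 0 + 1)
  omega
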